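/- Let R be an algebraic curvature tensor on ℝⁿ whose sectional curvatures all lie in an interval [K_min, K_max]. Then for all orthonormal vectors x, y, z, w one has |R(x,y,z,w)| ≤ (2/3)(K_max - K_min) (Berger's inequality). -/

import Mathlib

set_option maxHeartbeats 2000000 in
/-- Berger's inequality: if all sectional curvatures of an algebraic curvature tensor lie
in [Kmin, Kmax], then |R(x,y,z,w)| ≤ (2/3)(Kmax - Kmin) for orthonormal x,y,z,w. -/
theorem stmt_2 (n : ℕ)
    (R : EuclideanSpace ℝ (Fin n) →ₗ[ℝ] EuclideanSpace ℝ (Fin n) →ₗ[ℝ]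
      EuclideanSpace ℝ (Fin n) →ₗ[ℝ] EuclideanSpace ℝ (Fin n) →ₗ[ℝ] ℝ)
    (Kmin Kmax : ℝ)
    (hanti : ∀ x y z w, R x y z w = - R y x z w)
    (hpair : ∀ x y z w, R x y z w = R z w x y)
    (hbianchi : ∀ x y z w, R x y z w + R y z x w + R z x y w = 0)
    (hsec : ∀ x y : EuclideanSpace ℝ (Fin n),
      (inner ℝ x x : ℝ) = 1 → (inner ℝ y y : ℝ) = 1 → (inner ℝ x y : ℝ) = 0 →
      Kmin ≤ R x y x y ∧ R x y x y ≤ Kmax) :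
    ∀ e : Fin 4 → EuclideanSpace ℝ (Fin n), Orthonormal ℝ e →
      |R (e 0) (e 1) (e 2) (e 3)| ≤ (2/3) * (Kmax - Kmin) := by
  intro e he
  have hij := orthonormal_iff_ite.mp he
  set x := e 0 with hx
  set y := e 1 with hy
  set z := e 2 with hz
  set w := e 3 with hw
  have hxx : (inner ℝ x x : ℝ) = 1 := by simpa using hij 0 0
  have hyy : (inner ℝ y y : ℝ) = 1 := by simpa using hij 1 1
  have hzz : (inner ℝ z z : ℝ) = 1 := by simpa using hij 2 2
  have hww : (inner ℝ w w : ℝ) = 1 := by simpa using hij 3 3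
  have hxy : (inner ℝ x y : ℝ) = 0 := by simpa using hij 0 1
  have hyx : (inner ℝ y x : ℝ) = 0 := by simpa using hij 1 0
  have hxz : (inner ℝ x z : ℝ) = 0 := by simpa using hij 0 2
  have hzx : (inner ℝ z x : ℝ) = 0 := by simpa using hij 2 0
  have hxw : (inner ℝ x w : ℝ) = 0 := by simpa using hij 0 3
  have hwx : (inner ℝ w x : ℝ) = 0 := by simpa using hij 3 0
  have hyz : (inner ℝ y z : ℝ) = 0 := by simpa using hij 1 2
  have hzy : (inner ℝ z y : ℝ) = 0 := by simpa using hij 2 1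
  have hyw : (inner ℝ y w : ℝ) = 0 := by simpa using hij 1 3
  have hwy : (inner ℝ w y : ℝ) = 0 := by simpa using hij 3 1
  have hzw : (inner ℝ z w : ℝ) = 0 := by simpa using hij 2 3
  have hwz : (inner ℝ w z : ℝ) = 0 := by simpa using hij 3 2
  -- key scaling lemma
  have key : ∀ u v : EuclideanSpace ℝ (Fin n), (inner ℝ u u : ℝ) = 2 →
      (inner ℝ v v : ℝ) = 2 → (inner ℝ u v : ℝ) = 0 →
      4 * Kmin ≤ R u v u v ∧ R u v u v ≤ 4 * Kmax := by
    intro u v hu hv huv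
    set c : ℝ := (Real.sqrt 2)⁻¹ with hcdef
    have hc : c ^ 2 = 1 / 2 := by
      rw [hcdef, inv_pow, sq, Real.mul_self_sqrt (by norm_num : (0:ℝ) ≤ 2)]
      norm_num
    have h1 : (inner ℝ (c • u) (c • u) : ℝ) = 1 := by
      rw [real_inner_smul_left, real_inner_smul_right, hu]; nlinarith [hc]
    have h2 : (inner ℝ (c • v) (c • v) : ℝ) = 1 := by
      rw [real_inner_smul_left, real_inner_smul_right, hv]; nlinarith [hc]
    have h3 : (inner ℝ (c • u) (c • v) : ℝ) = 0 := by
      rw [real_inner_smul_left, real_inner_smul_right, huv]; ring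
    have hb := hsec (c • u) (c • v) h1 h2 h3
    have hR : R (c • u) (c • v) (c • u) (c • v) = c ^ 4 * R u v u v := by
      simp only [map_smul, LinearMap.smul_apply, smul_eq_mul]
      ring
    have hc4 : c ^ 4 = 1 / 4 := by nlinarith [hc]
    rw [hR, hc4] at hb
    constructor <;> nlinarith [hb.1, hb.2]
  have b1 := key (x + z) (y + w)
    (by simp [inner_add_left, inner_add_right, hxx, hzz, hxz, hzx, -inner_self_eq_norm_sq_to_K]; norm_num)
    (by simp [inner_add_left, inner_add_right, hyy, hww, hyw, hwy, -inner_self_eq_norm_sq_to_K]; norm_num)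
    (by simp [inner_add_left, inner_add_right, hxy, hxw, hzy, hzw])
  have b2 := key (x + z) (y - w)
    (by simp [inner_add_left, inner_add_right, hxx, hzz, hxz, hzx, -inner_self_eq_norm_sq_to_K]; norm_num)
    (by simp [inner_sub_left, inner_sub_right, hyy, hww, hyw, hwy, -inner_self_eq_norm_sq_to_K]; norm_num)
    (by simp [inner_add_left, inner_add_right, inner_sub_left, inner_sub_right, hxy, hxw, hzy, hzw])
  have b3 := key (x - z) (y + w)
    (by simp [inner_sub_left, inner_sub_right, hxx, hzz, hxz, hzx, -inner_self_eq_norm_sq_to_K]; norm_num)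
    (by simp [inner_add_left, inner_add_right, hyy, hww, hyw, hwy, -inner_self_eq_norm_sq_to_K]; norm_num)
    (by simp [inner_add_left, inner_add_right, inner_sub_left, inner_sub_right, hxy, hxw, hzy, hzw])
  have b4 := key (x - z) (y - w)
    (by simp [inner_sub_left, inner_sub_right, hxx, hzz, hxz, hzx, -inner_self_eq_norm_sq_to_K]; norm_num)
    (by simp [inner_sub_left, inner_sub_right, hyy, hww, hyw, hwy, -inner_self_eq_norm_sq_to_K]; norm_num)
    (by simp [inner_sub_left, inner_sub_right, hxy, hxw, hzy, hzw])
  have b5 := key (x + w) (y + z)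
    (by simp [inner_add_left, inner_add_right, hxx, hww, hxw, hwx, -inner_self_eq_norm_sq_to_K]; norm_num)
    (by simp [inner_add_left, inner_add_right, hyy, hzz, hyz, hzy, -inner_self_eq_norm_sq_to_K]; norm_num)
    (by simp [inner_add_left, inner_add_right, hxy, hxz, hwy, hwz])
  have b6 := key (x + w) (y - z)
    (by simp [inner_add_left, inner_add_right, hxx, hww, hxw, hwx, -inner_self_eq_norm_sq_to_K]; norm_num)
    (by simp [inner_sub_left, inner_sub_right, hyy, hzz, hyz, hzy, -inner_self_eq_norm_sq_to_K]; norm_num)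
    (by simp [inner_add_left, inner_add_right, inner_sub_left, inner_sub_right, hxy, hxz, hwy, hwz])
  have b7 := key (x - w) (y + z)
    (by simp [inner_sub_left, inner_sub_right, hxx, hww, hxw, hwx, -inner_self_eq_norm_sq_to_K]; norm_num)
    (by simp [inner_add_left, inner_add_right, hyy, hzz, hyz, hzy, -inner_self_eq_norm_sq_to_K]; norm_num)
    (by simp [inner_add_left, inner_add_right, inner_sub_left, inner_sub_right, hxy, hxz, hwy, hwz])
  have b8 := key (x - w) (y - z)
    (by simp [inner_sub_left, inner_sub_right, hxx, hww, hxw, hwx, -inner_self_eq_norm_sq_to_K]; norm_num)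
    (by simp [inner_sub_left, inner_sub_right, hyy, hzz, hyz, hzy, -inner_self_eq_norm_sq_to_K]; norm_num)
    (by simp [inner_sub_left, inner_sub_right, hxy, hxz, hwy, hwz])
  have hident : 24 * R x y z w =
      R (x + z) (y + w) (x + z) (y + w) - R (x + z) (y - w) (x + z) (y - w)
      - R (x - z) (y + w) (x - z) (y + w) + R (x - z) (y - w) (x - z) (y - w)
      - R (x + w) (y + z) (x + w) (y + z) + R (x + w) (y - z) (x + w) (y - z)
      + R (x - w) (y + z) (x - w) (y + z) - R (x - w) (y - z) (x - w) (y - z) := by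
    simp only [map_add, map_sub, LinearMap.add_apply, LinearMap.sub_apply, sub_eq_add_neg x z, sub_eq_add_neg x w,
      ← neg_one_smul ℝ z, ← neg_one_smul ℝ w, map_smul, LinearMap.smul_apply, smul_eq_mul]
    linarith [hpair z w x y, hpair x w z y, hanti w z x y, hpair x y w z,
      hanti y z x w, hbianchi x y z w, hanti x z w y, hpair z x w y, hpair x z w y,
      hanti w y z x, hpair y w z x]
  rw [abs_le]
  constructor <;>
    linarith [b1.1, b1.2, b2.1, b2.2, b3.1, b3.2, b4.1, b4.2,
      b5.1, b5.2, b6.1, b6.2, b7.1, b7.2, b8.1, b8.2, hident]
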